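/- arXiv:0811.3959 — 3 statements merged into one kernel-verified Lean document; each statement's English description precedes it below -/
import Mathlib

section
/- Let Q ≥ 2 and E ≥ 2 be natural numbers, set P = Q^E and T = 1 + Q^(E-1). If A is a natural number with A^(P-1) ≡ 1 (mod P), then (A·T)^(P-1) ≢ 1 (mod P); that is, multiplication by T maps each element passing the Fermat test modulo P to one failing it. -/
lemma one_add_sq_zero_pow {R : Type*} [CommRing R] (q : R) (hq : q * q = 0) (n : ℕ) :
    (1 + q) ^ n = 1 + (n : R) * q := by
  induction n with
  | zero => simp
  | succ n ih =>
    rw [pow_succ, ih]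
    push_cast
    have : q ^ 2 = 0 := by rw [sq]; exact hq
    ring_nf
    rw [this]
    ring

/-- For `P = Q^E`, `T = 1 + Q^(E-1)` with `Q, E ≥ 2`: if `A^(P-1) ≡ 1 (mod P)`
then `(A·T)^(P-1) ≢ 1 (mod P)`. -/
theorem stmt_5 (Q E : ℕ) (hQ : 2 ≤ Q) (hE : 2 ≤ E) (A : ℕ)
    (hA : A ^ (Q ^ E - 1) ≡ 1 [MOD Q ^ E]) :
    ¬ ((A * (1 + Q ^ (E - 1))) ^ (Q ^ E - 1) ≡ 1 [MOD Q ^ E]) := by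
  intro h
  set P := Q ^ E with hP
  have hQ0 : 0 < Q := by omega
  have hP1 : 1 < P := one_lt_pow₀ (by omega) (by omega)
  -- move to ZMod P
  have hA' : (A : ZMod P) ^ (P - 1) = 1 := by
    have := (ZMod.natCast_eq_natCast_iff _ _ _).mpr hA
    push_cast at this; exact this
  have h' : ((A : ZMod P) * (1 + (Q : ZMod P) ^ (E - 1))) ^ (P - 1) = 1 := by
    have := (ZMod.natCast_eq_natCast_iff _ _ _).mpr h
    push_cast at this; exact this
  set q : ZMod P := (Q : ZMod P) ^ (E - 1) with hqdef
  have hq2 : q * q = 0 := by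
    have hdvd : P ∣ Q ^ (E - 1) * Q ^ (E - 1) := by
      rw [← pow_add, hP]
      exact pow_dvd_pow Q (by omega)
    have : ((Q ^ (E - 1) * Q ^ (E - 1) : ℕ) : ZMod P) = 0 :=
      (ZMod.natCast_eq_zero_iff _ _).mpr hdvd
    push_cast at this
    exact this
  have hT : (1 + q) ^ (P - 1) = 1 + ((P - 1 : ℕ) : ZMod P) * q :=
    one_add_sq_zero_pow q hq2 _
  have hPm1 : ((P - 1 : ℕ) : ZMod P) = -1 := by
    have : ((P - 1 : ℕ) : ZMod P) = (P : ZMod P) - 1 := by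
      rw [Nat.cast_sub (by omega)]; simp
    rw [this, ZMod.natCast_self]; ring
  rw [mul_pow, hA', one_mul, hT, hPm1] at h'
  have hq0 : q = 0 := by linear_combination -h'
  have : P ∣ Q ^ (E - 1) := by
    rw [hqdef] at hq0
    have : ((Q ^ (E - 1) : ℕ) : ZMod P) = 0 := by push_cast; exact hq0
    exact (ZMod.natCast_eq_zero_iff _ _).mp this
  have hlt : Q ^ (E - 1) < P := by
    rw [hP]
    exact Nat.pow_lt_pow_right (by omega) (by omega)
  have := Nat.le_of_dvd (pow_pos hQ0 _) this
  omega
end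

section
/- Let P be an odd number greater than 1 and write P - 1 = S·2^h with S odd. Suppose i < h is such that there exists Z with Z^(S·2^i) ≡ -1 (mod P) but no X satisfies X^(S·2^(i+1)) ≡ -1 (mod P). Then every Rabin–Miller non-witness A for P satisfies A^(S·2^(i+1)) ≡ 1 (mod P) and A^(S·2^i) ≡ ±1 (mod P); in particular every non-witness satisfies A^(P-1) ≡ 1 (mod P). -/
/-- `A` is a Rabin–Miller non-witness for an odd `P > 1` with `P - 1 = S·2^h` (`S` odd):
`A^S ≡ 1 (mod P)` or `A^(S·2^i) ≡ -1 (mod P)` for some `i < h`. -/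
def RMNonWitness (P S h A : ℕ) : Prop :=
  A ^ S ≡ 1 [MOD P] ∨ ∃ i < h, A ^ (S * 2 ^ i) ≡ P - 1 [MOD P]

/-- If `i < h` is such that `-1` is a power-residue at level `i` but not at
level `i+1`, then every Rabin–Miller non-witness `A` satisfies
`A^(S·2^(i+1)) ≡ 1 (mod P)` and `A^(S·2^i) ≡ ±1 (mod P)`; in particular
`A^(P-1) ≡ 1 (mod P)`. -/
theorem stmt_8 (P S h i : ℕ) (hodd : Odd P) (hP : 1 < P)
    (hfact : P - 1 = S * 2 ^ h) (hS : Odd S) (hi : i < h)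
    (hex : ∃ Z : ℕ, Z ^ (S * 2 ^ i) ≡ P - 1 [MOD P])
    (hnex : ¬ ∃ X : ℕ, X ^ (S * 2 ^ (i + 1)) ≡ P - 1 [MOD P]) :
    ∀ A : ℕ, 1 ≤ A → A < P → RMNonWitness P S h A →
      A ^ (S * 2 ^ (i + 1)) ≡ 1 [MOD P] ∧
      (A ^ (S * 2 ^ i) ≡ 1 [MOD P] ∨ A ^ (S * 2 ^ i) ≡ P - 1 [MOD P]) ∧
      A ^ (P - 1) ≡ 1 [MOD P] := by
  intro A hA1 hAP hnw
  have hP2 : 2 < P := by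
    rcases hodd with ⟨k, hk⟩; omega
  have key : ∀ a b : ℕ, a ≡ b [MOD P] ↔ ((a : ZMod P) = (b : ZMod P)) :=
    fun a b => (ZMod.natCast_eq_natCast_iff a b P).symm
  have hm1 : ((P - 1 : ℕ) : ZMod P) = -1 := by
    have h1 : ((P - 1 : ℕ) : ZMod P) = (P : ZMod P) - 1 := by
      rw [Nat.cast_sub (by omega : 1 ≤ P)]; push_cast; ring
    rw [h1, ZMod.natCast_self]; ring
  set g : ZMod P := (A : ZMod P) with hg
  -- translate each goal to ZMod
  have trans1 : ∀ e : ℕ, (A ^ e ≡ 1 [MOD P]) ↔ g ^ e = 1 := by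
    intro e; rw [key]; push_cast; rfl
  have trans2 : ∀ e : ℕ, (A ^ e ≡ P - 1 [MOD P]) ↔ g ^ e = -1 := by
    intro e; rw [key, hm1]; push_cast; rfl
  have step : ∀ j k : ℕ, j ≤ k → g ^ (S * 2 ^ j) = 1 → g ^ (S * 2 ^ k) = 1 := by
    intro j k hjk h1
    have he : S * 2 ^ k = S * 2 ^ j * 2 ^ (k - j) := by
      rw [mul_assoc, ← pow_add, Nat.add_sub_cancel' hjk]
    rw [he, pow_mul, h1, one_pow]
  have main : g ^ (S * 2 ^ (i + 1)) = 1 ∧ (g ^ (S * 2 ^ i) = 1 ∨ g ^ (S * 2 ^ i) = -1) := by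
    rcases hnw with h1 | ⟨j, hjh, hj⟩
    · have f0 : g ^ (S * 2 ^ 0) = 1 := by
        have := (trans1 S).mp h1; simpa using this
      exact ⟨step 0 _ (by omega) f0, Or.inl (step 0 _ (by omega) f0)⟩
    · have hj' : g ^ (S * 2 ^ j) = -1 := (trans2 _).mp hj
      have hji : j ≤ i := by
        by_contra hc
        push_neg at hc
        apply hnex
        refine ⟨A ^ 2 ^ (j - (i + 1)), ?_⟩
        rw [key, hm1]
        push_cast
        rw [← pow_mul]
        have he : 2 ^ (j - (i + 1)) * (S * 2 ^ (i + 1)) = S * 2 ^ j := by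
          rw [mul_comm, mul_assoc, ← pow_add, Nat.add_sub_cancel' (by omega : i + 1 ≤ j)]
        rw [he]; exact hj'
      rcases eq_or_lt_of_le hji with rfl | hlt
      · have : g ^ (S * 2 ^ (j + 1)) = 1 := by
          have he : S * 2 ^ (j + 1) = S * 2 ^ j * 2 := by ring
          rw [he, pow_mul, hj']; ring
        exact ⟨this, Or.inr hj'⟩
      · have hj1 : g ^ (S * 2 ^ (j + 1)) = 1 := by
          have he : S * 2 ^ (j + 1) = S * 2 ^ j * 2 := by ring
          rw [he, pow_mul, hj']; ring
        have fi : g ^ (S * 2 ^ i) = 1 := step (j + 1) i (by omega) hj1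
        exact ⟨step (j + 1) (i + 1) (by omega) hj1, Or.inl fi⟩
  refine ⟨(trans1 _).mpr main.1, ?_, ?_⟩
  · rcases main.2 with h | h
    · exact Or.inl ((trans1 _).mpr h)
    · exact Or.inr ((trans2 _).mpr h)
  · rw [hfact]
    exact (trans1 _).mpr (step (i + 1) h (by omega) main.1)
end

section
/- Let P be an odd composite number and write P - 1 = S·2^h with S odd. Then the number of A with 1 ≤ A < P that are Rabin–Miller non-witnesses for P is at most (P-1)/2; equivalently, the Rabin–Miller test rejects a composite input P for at least half of the bases A in {1, …, P-1}. -/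
private lemma RM_neg_one_ne_one {n : ℕ} (h : 2 < n) : (-1 : ZMod n) ≠ 1 := by
  intro heq
  haveI : NeZero n := ⟨by omega⟩
  have h2 : ((2:ℕ) : ZMod n) = 0 := by push_cast; linear_combination -heq
  have hd := (ZMod.natCast_eq_zero_iff 2 n).mp h2
  have := Nat.le_of_dvd (by norm_num) hd
  omega

private lemma RM_neg_one_lemma {P n : ℕ} (hodd : Odd P) (hn : n ∣ P) (h1 : 1 < n) :
    (-1 : ZMod n) ≠ 1 := by
  apply RM_neg_one_ne_one
  by_contra hlt
  push_neg at hlt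
  have hn2 : n = 2 := by omega
  subst hn2
  have := Nat.odd_iff.mp hodd
  omega

/-- For odd composite `P` with `P - 1 = S·2^h` (`S` odd), the number of
Rabin–Miller non-witnesses `A` with `1 ≤ A < P` is at most `(P-1)/2`. -/
theorem stmt_10 (P S h : ℕ) (hodd : Odd P) (hP : 1 < P) (hnp : ¬ P.Prime)
    (hfact : P - 1 = S * 2 ^ h) (hS : Odd S) :
    {A : ℕ | 1 ≤ A ∧ A < P ∧ RMNonWitness P S h A}.ncard ≤ (P - 1) / 2 := by
  haveI : NeZero P := ⟨by omega⟩
  have hP2 : 2 < P := by rcases hodd with ⟨k, hk⟩; omega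
  have hS1 : 1 ≤ S := hS.pos
  have hh1 : 1 ≤ h := by
    rcases Nat.eq_zero_or_pos h with rfl | hp
    · exfalso
      have heven : Even (P - 1) := Nat.Odd.sub_odd hodd odd_one
      rw [hfact, pow_zero, mul_one] at heven
      exact (Nat.not_even_iff_odd.mpr hS) heven
    · exact hp
  set Q : ℕ → Prop := fun i => ∃ u : (ZMod P)ˣ, u ^ (S * 2 ^ i) = -1 with hQdef
  have hQ0 : Q 0 := ⟨-1, by simp [Odd.neg_one_pow hS]⟩
  have hQj : Q (Nat.findGreatest Q (h - 1)) := Nat.findGreatest_spec (Nat.zero_le _) hQ0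
  set j : ℕ := Nat.findGreatest Q (h - 1) with hjdef
  have hjle : j ≤ h - 1 := Nat.findGreatest_le _
  have hjh : j < h := by omega
  let B : Subgroup (ZMod P)ˣ :=
    { carrier := {u : (ZMod P)ˣ | u ^ (S * 2 ^ j) = 1 ∨ u ^ (S * 2 ^ j) = -1}
      one_mem' := Or.inl (one_pow _)
      mul_mem' := by
        rintro a b (ha | ha) (hb | hb) <;>
          simp [Set.mem_setOf_eq, mul_pow, ha, hb]
      inv_mem' := by
        rintro a (ha | ha) <;>
          simp [Set.mem_setOf_eq, inv_pow, ha] }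
  have hBmem : ∀ u : (ZMod P)ˣ,
      u ∈ B ↔ (u ^ (S * 2 ^ j) = 1 ∨ u ^ (S * 2 ^ j) = -1) := fun u => Iff.rfl
  have hPm1 : ((P - 1 : ℕ) : ZMod P) = -1 := by
    rw [Nat.cast_sub (by omega : 1 ≤ P), ZMod.natCast_self, Nat.cast_one]; ring
  -- every non-witness gives a unit in B
  have hmem : ∀ A : ℕ, A < P → RMNonWitness P S h A →
      ∃ u : (ZMod P)ˣ, u ∈ B ∧ (u : ZMod P) = (A : ZMod P) := by
    intro A hAP hnw
    rcases hnw with h1 | ⟨i, hih, hAi⟩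
    · have hc : ((A : ZMod P)) ^ S = 1 := by
        have h' := (ZMod.natCast_eq_natCast_iff _ _ _).mpr h1
        push_cast at h'
        exact h'
      have hu : IsUnit (A : ZMod P) := by
        apply IsUnit.of_mul_eq_one ((A : ZMod P) ^ (S - 1))
        rw [← pow_succ', Nat.sub_add_cancel hS1]
        exact hc
      refine ⟨hu.unit, (hBmem _).mpr (Or.inl ?_), hu.unit_spec⟩
      apply Units.ext
      rw [Units.val_pow_eq_pow_val, hu.unit_spec, Units.val_one, pow_mul, hc, one_pow]
    · have hc : ((A : ZMod P)) ^ (S * 2 ^ i) = -1 := by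
        have h' := (ZMod.natCast_eq_natCast_iff _ _ _).mpr hAi
        rw [hPm1] at h'
        push_cast at h'
        exact h'
      have hu : IsUnit (A : ZMod P) := by
        apply IsUnit.of_mul_eq_one (-(A : ZMod P) ^ (S * 2 ^ i - 1))
        have hpos : 0 < S * 2 ^ i := by positivity
        rw [mul_neg, ← pow_succ', Nat.sub_add_cancel hpos, hc, neg_neg]
      have hunit_pow : hu.unit ^ (S * 2 ^ i) = -1 := by
        apply Units.ext
        rw [Units.val_pow_eq_pow_val, hu.unit_spec, Units.val_neg, Units.val_one]
        exact hc
      have hile : i ≤ j := by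
        by_contra hgt
        push_neg at hgt
        exact Nat.findGreatest_is_greatest (hjdef ▸ hgt) (by omega) ⟨hu.unit, hunit_pow⟩
      have hsplit : S * 2 ^ j = (S * 2 ^ i) * 2 ^ (j - i) := by
        rw [mul_assoc, ← pow_add, Nat.add_sub_cancel' hile]
      refine ⟨hu.unit, (hBmem _).mpr ?_, hu.unit_spec⟩
      rcases eq_or_lt_of_le hile with rfl | hlt
      · exact Or.inr (by rw [hsplit]; simpa using hunit_pow)
      · refine Or.inl ?_
        rw [hsplit, pow_mul, hunit_pow]
        exact Even.neg_one_pow (Nat.even_pow.mpr ⟨even_iff_two_dvd.mpr ⟨1, rfl⟩, by omega⟩)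
  -- factorization of P
  have hPne : P ≠ 0 := by omega
  have hqp : Nat.Prime P.minFac := Nat.minFac_prime (by omega)
  set q := P.minFac with hqdef
  have hqdvd : q ∣ P := Nat.minFac_dvd P
  set e := P.factorization q with hedef
  have hPet : q ^ e * (P / q ^ e) = P := Nat.ordProj_mul_ordCompl_eq_self P q
  set t := P / q ^ e with htdef
  have hqt : ¬ q ∣ t := Nat.not_dvd_ordCompl hqp hPne
  have he1 : 1 ≤ e := hqp.factorization_pos_of_dvd hPne hqdvd
  have hqeP : q ^ e ∣ P := ⟨t, hPet.symm⟩
  have htP : t ∣ P := ⟨q ^ e, by rw [← hPet]; ring⟩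
  have htne : t ≠ 0 := by intro h0; rw [h0, mul_zero] at hPet; omega
  obtain ⟨a, ha⟩ := hQj
  -- B is a proper subgroup
  have hBne : B ≠ ⊤ := by
    intro htop
    have hvala : ((a : ZMod P)) ^ (S * 2 ^ j) = -1 := by
      have := congrArg Units.val ha
      rwa [Units.val_pow_eq_pow_val, Units.val_neg, Units.val_one] at this
    rcases Nat.lt_or_ge 1 t with ht1 | ht1
    · -- CRT case : two nontrivial coprime factors q^e and t
      have hco : Nat.Coprime (q ^ e) t :=
        Nat.Coprime.pow_left e ((hqp.coprime_iff_not_dvd).mpr hqt)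
      have hqe1 : 1 < q ^ e := Nat.one_lt_pow (by omega) hqp.one_lt
      set A := ((a : ZMod P)).val with hAdef
      have hAco : Nat.Coprime A P := ZMod.val_coe_unit_coprime a
      have hAcast : ((A : ℕ) : ZMod P) = (a : ZMod P) := ZMod.natCast_rightInverse _
      obtain ⟨b, hb1, hb2⟩ := Nat.chineseRemainder hco A 1
      have hbu : IsUnit (b : ZMod P) := by
        rw [ZMod.isUnit_iff_coprime, ← hPet]
        apply Nat.Coprime.mul_right
        · exact (hb1.gcd_eq).trans (hAco.coprime_dvd_right hqeP)
        · exact (hb2.gcd_eq).trans (Nat.gcd_one_left t)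
      have hbB := (hBmem hbu.unit).mp (htop ▸ Subgroup.mem_top hbu.unit)
      have hA' : ((A : ℕ) : ZMod (q ^ e)) ^ (S * 2 ^ j) = -1 := by
        have := congrArg (ZMod.castHom hqeP (ZMod (q ^ e))) (hAcast ▸ hvala)
        rwa [map_pow, map_neg, map_one, map_natCast] at this
      rcases hbB with hb | hb
      · have hval : ((b : ZMod P)) ^ (S * 2 ^ j) = 1 := by
          have := congrArg Units.val hb
          rwa [Units.val_pow_eq_pow_val, hbu.unit_spec, Units.val_one] at this
        have hmod : ((b : ZMod (q ^ e))) ^ (S * 2 ^ j) = 1 := by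
          have := congrArg (ZMod.castHom hqeP (ZMod (q ^ e))) hval
          rwa [map_pow, map_one, map_natCast] at this
        rw [(ZMod.natCast_eq_natCast_iff _ _ _).mpr hb1] at hmod
        exact RM_neg_one_lemma hodd hqeP hqe1 (hA'.symm.trans hmod)
      · have hval : ((b : ZMod P)) ^ (S * 2 ^ j) = -1 := by
          have := congrArg Units.val hb
          rwa [Units.val_pow_eq_pow_val, hbu.unit_spec, Units.val_neg, Units.val_one] at this
        have hmod : ((b : ZMod t)) ^ (S * 2 ^ j) = -1 := by
          have := congrArg (ZMod.castHom htP (ZMod t)) hval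
          rwa [map_pow, map_neg, map_one, map_natCast] at this
        rw [(ZMod.natCast_eq_natCast_iff _ _ _).mpr hb2, Nat.cast_one, one_pow] at hmod
        exact RM_neg_one_lemma hodd htP ht1 hmod.symm
    · -- prime power case : P = q ^ e with e ≥ 2
      have ht1' : t = 1 := Nat.le_antisymm ht1 (Nat.one_le_iff_ne_zero.mpr htne)
      have hPqe : P = q ^ e := by rw [← hPet, ht1', mul_one]
      have he2 : 2 ≤ e := by
        rcases Nat.lt_or_ge e 2 with h2 | h2
        · interval_cases e
          · exact absurd (by rw [hPqe, pow_one]; exact hqp) hnp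
        · exact h2
      set x : ZMod P := (q : ZMod P) ^ (e - 1) + 1 with hxdef
      have hdvd : ∀ k : ℕ, P ∣ q ^ ((e - 1) * (k + 1)) * Nat.choose q (k + 1) := by
        intro k
        rcases Nat.eq_zero_or_pos k with rfl | hk
        · have heq : q ^ ((e - 1) * (0 + 1)) * Nat.choose q 1 = q ^ e := by
            rw [Nat.choose_one_right, Nat.mul_one, ← pow_succ]
            congr 1; omega
          rw [heq, hPqe]
        · apply Dvd.dvd.mul_right
          rw [hPqe]
          apply pow_dvd_pow
          calc e ≤ (e - 1) * 2 := by omega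
            _ ≤ (e - 1) * (k + 1) := Nat.mul_le_mul_left _ (by omega)
      have hxq : x ^ q = 1 := by
        rw [hxdef, add_pow, Finset.sum_range_succ']
        have hz : ∑ k ∈ Finset.range q,
            ((q : ZMod P) ^ (e - 1)) ^ (k + 1) * (1 : ZMod P) ^ (q - (k + 1)) *
              (Nat.choose q (k + 1) : ZMod P) = 0 := by
          apply Finset.sum_eq_zero
          intro k _
          rw [one_pow, mul_one, ← pow_mul]
          have hcast : (q : ZMod P) ^ ((e - 1) * (k + 1)) * (Nat.choose q (k + 1) : ZMod P)
              = ((q ^ ((e - 1) * (k + 1)) * Nat.choose q (k + 1) : ℕ) : ZMod P) := by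
            push_cast; ring
          rw [hcast]
          exact (ZMod.natCast_eq_zero_iff _ _).mpr (hdvd k)
        rw [hz, zero_add]
        simp
      have hx1 : x ≠ 1 := by
        rw [hxdef]
        intro hx
        have hc0 : ((q ^ (e - 1) : ℕ) : ZMod P) = 0 := by
          push_cast
          linear_combination hx
        have hd := (ZMod.natCast_eq_zero_iff _ _).mp hc0
        rw [hPqe] at hd
        have h1 := Nat.le_of_dvd (pow_pos hqp.pos _) hd
        have h2 := Nat.pow_lt_pow_right hqp.one_lt (by omega : e - 1 < e)
        omega
      have hux : IsUnit x := by
        apply IsUnit.of_mul_eq_one (x ^ (q - 1))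
        rw [← pow_succ', Nat.sub_add_cancel hqp.pos]
        exact hxq
      have hxB := (hBmem hux.unit).mp (htop ▸ Subgroup.mem_top hux.unit)
      have hx2 : (hux.unit ^ (S * 2 ^ j)) ^ 2 = 1 := by
        rcases hxB with hB1 | hB1 <;> rw [hB1] <;> simp
      have hpow2 : (2:ℕ) ^ j * 2 * 2 ^ (h - 1 - j) = 2 ^ h := by
        rw [← pow_succ, ← pow_add]
        congr 1
        omega
      have hexp : S * 2 ^ j * 2 * 2 ^ (h - 1 - j) = P - 1 := by
        calc S * 2 ^ j * 2 * 2 ^ (h - 1 - j) = S * (2 ^ j * 2 * 2 ^ (h - 1 - j)) := by ring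
          _ = S * 2 ^ h := by rw [hpow2]
          _ = P - 1 := hfact.symm
      have hxP1 : hux.unit ^ (P - 1) = 1 := by
        rw [← hexp, pow_mul, pow_mul, hx2, one_pow]
      have hxP1' : x ^ (P - 1) = 1 := by
        have := congrArg Units.val hxP1
        rwa [Units.val_pow_eq_pow_val, hux.unit_spec, Units.val_one] at this
      have hqe' : P = q * q ^ (e - 1) := by
        rw [hPqe, ← pow_succ']; congr 1; omega
      have hxP : x ^ P = 1 := by
        rw [show x ^ P = x ^ (q * q ^ (e - 1)) from congrArg (fun n => x ^ n) hqe',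
          pow_mul, hxq, one_pow]
      have hxeq : x = 1 := by
        have h1 : x ^ ((P - 1) + 1) = x := by rw [pow_succ, hxP1', one_mul]
        rw [show (P - 1) + 1 = P from by omega, hxP] at h1
        exact h1.symm
      exact hx1 hxeq
  -- counting
  haveI : Finite ((ZMod P)ˣ) := inferInstance
  have hidx : 2 ≤ B.index := B.one_lt_index_of_ne_top hBne
  have hBcard : Nat.card B * B.index = Nat.card (ZMod P)ˣ := B.card_mul_index
  have hG : Nat.card (ZMod P)ˣ = Nat.totient P := by
    rw [Nat.card_eq_fintype_card, ZMod.card_units_eq_totient]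
  have htot : Nat.totient P < P := Nat.totient_lt P hP
  have hcard2 : Nat.card B * 2 ≤ P - 1 := by
    have h1 : Nat.card B * 2 ≤ Nat.card B * B.index := Nat.mul_le_mul_left _ hidx
    omega
  have hinj : Set.InjOn (fun A : ℕ => (A : ZMod P))
      {A : ℕ | 1 ≤ A ∧ A < P ∧ RMNonWitness P S h A} := by
    intro a₁ ha₁ a₂ ha₂ hab
    have := congrArg ZMod.val hab
    rwa [ZMod.val_cast_of_lt ha₁.2.1, ZMod.val_cast_of_lt ha₂.2.1] at this
  have hsub : (fun A : ℕ => (A : ZMod P)) '' {A : ℕ | 1 ≤ A ∧ A < P ∧ RMNonWitness P S h A}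
      ⊆ Units.val '' (B : Set (ZMod P)ˣ) := by
    rintro x ⟨A, ⟨hA1, hAP, hAnw⟩, rfl⟩
    obtain ⟨u, huB, huA⟩ := hmem A hAP hAnw
    exact ⟨u, huB, huA⟩
  calc {A : ℕ | 1 ≤ A ∧ A < P ∧ RMNonWitness P S h A}.ncard
      = ((fun A : ℕ => (A : ZMod P)) '' {A : ℕ | 1 ≤ A ∧ A < P ∧ RMNonWitness P S h A}).ncard :=
        (Set.ncard_image_of_injOn hinj).symm
    _ ≤ (Units.val '' (B : Set (ZMod P)ˣ)).ncard := Set.ncard_le_ncard hsub (Set.toFinite _)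
    _ = (B : Set (ZMod P)ˣ).ncard := Set.ncard_image_of_injective _ Units.val_injective
    _ = Nat.card B := by rw [← Nat.card_coe_set_eq]; rfl
    _ ≤ (P - 1) / 2 := (Nat.le_div_iff_mul_le (by norm_num)).mpr hcard2
end
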